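/- Let s ≥ 2 be an integer and let G be a K_{s,2}-free simple graph on n ≥ 1 vertices. Then every eigenvalue μ of the adjacency matrix of G satisfies μ ≤ 1/2 + sqrt((s − 1)(n − 1) + 1/4). In particular, the spectral radius of G satisfies this bound. -/

import Mathlib

open Finset Matrix

private lemma quad_bound (lam C : ℝ) (hC : 0 ≤ C) (h : lam ^ 2 - lam ≤ C) :
    lam ≤ 1 / 2 + Real.sqrt (C + 1 / 4) := by
  have h1 : (lam - 1 / 2) ^ 2 ≤ C + 1 / 4 := by nlinarith
  have h2 : lam - 1 / 2 ≤ Real.sqrt (C + 1 / 4) := by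
    calc lam - 1 / 2 ≤ |lam - 1 / 2| := le_abs_self _
      _ = Real.sqrt ((lam - 1 / 2) ^ 2) := (Real.sqrt_sq_eq_abs _).symm
      _ ≤ Real.sqrt (C + 1 / 4) := Real.sqrt_le_sqrt h1
  linarith

private lemma core_bound
    {V : Type*} [Fintype V] [DecidableEq V]
    (s n : ℕ) (hs : 2 ≤ s) (G : SimpleGraph V) [DecidableRel G.Adj]
    (hcard : Fintype.card V = n)
    (hfree : ¬ ∃ (S T : Finset V), Disjoint S T ∧ S.card = s ∧ T.card = 2 ∧
        ∀ a ∈ S, ∀ b ∈ T, G.Adj a b)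
    (lam : ℝ) (x : V → ℝ) (hx0 : x ≠ 0) (hxnn : ∀ i, 0 ≤ x i)
    (heig : (G.adjMatrix ℝ) *ᵥ x = lam • x) :
    lam ^ 2 - lam ≤ ((s : ℝ) - 1) * ((n : ℝ) - 1) := by
  obtain ⟨i0, hi0⟩ := Function.ne_iff.mp hx0
  obtain ⟨u, -, hu⟩ := Finset.exists_max_image Finset.univ x ⟨i0, mem_univ i0⟩
  have hxu : 0 < x u :=
    lt_of_lt_of_le ((hxnn i0).lt_of_ne (Ne.symm hi0)) (hu i0 (mem_univ i0))
  have hn1 : 1 ≤ n := by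
    have : 0 < Fintype.card V := Fintype.card_pos_iff.mpr ⟨u⟩
    omega
  have e1 : ∑ w ∈ G.neighborFinset u, x w = lam * x u := by
    have h := congrFun heig u
    simpa using h
  have e2 : ∑ w ∈ G.neighborFinset u, ∑ y ∈ G.neighborFinset w, x y = lam ^ 2 * x u := by
    have h : (G.adjMatrix ℝ) *ᵥ ((G.adjMatrix ℝ) *ᵥ x) = (lam ^ 2) • x := by
      rw [heig, Matrix.mulVec_smul, heig, smul_smul, ← sq]
    have h2 := congrFun h u
    simpa using h2
  have e3 : ∑ w ∈ G.neighborFinset u, ∑ y ∈ G.neighborFinset w, x y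
      = ∑ y ∈ Finset.univ,
          ((((G.neighborFinset u).filter (fun w => G.Adj w y)).card : ℝ)) * x y := by
    have hinner : ∀ w : V, ∑ y ∈ G.neighborFinset w, x y
        = ∑ y ∈ Finset.univ, if G.Adj w y then x y else 0 := by
      intro w
      rw [SimpleGraph.neighborFinset_eq_filter, Finset.sum_filter]
    simp_rw [hinner]
    rw [Finset.sum_comm]
    refine Finset.sum_congr rfl fun y _ => ?_
    rw [← Finset.sum_filter, Finset.sum_const, nsmul_eq_mul]
  have hcodeg : ∀ y : V, y ≠ u →
      (((G.neighborFinset u).filter (fun w => G.Adj w y)).card : ℝ) ≤ (s : ℝ) - 1 := by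
    intro y hy
    have hcard' : ((G.neighborFinset u).filter (fun w => G.Adj w y)).card ≤ s - 1 := by
      by_contra hc
      push_neg at hc
      have hsle : s ≤ ((G.neighborFinset u).filter (fun w => G.Adj w y)).card := by omega
      obtain ⟨S, hS, hScard⟩ := Finset.exists_subset_card_eq hsle
      refine hfree ⟨S, {u, y}, ?_, hScard, ?_, ?_⟩
      · rw [Finset.disjoint_left]
        intro a haS haT
        have ha := hS haS
        rw [Finset.mem_filter, SimpleGraph.mem_neighborFinset] at ha
        rcases Finset.mem_insert.mp haT with rfl | h
        · exact G.irrefl ha.1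
        · rw [Finset.mem_singleton] at h
          subst h
          exact G.irrefl ha.2
      · rw [Finset.card_insert_of_notMem (by simp [hy.symm]), Finset.card_singleton]
      · intro a haS b hbT
        have ha := hS haS
        rw [Finset.mem_filter, SimpleGraph.mem_neighborFinset] at ha
        rcases Finset.mem_insert.mp hbT with rfl | h
        · exact ha.1.symm
        · rw [Finset.mem_singleton] at h
          subst h
          exact ha.2
    calc (((G.neighborFinset u).filter (fun w => G.Adj w y)).card : ℝ)
        ≤ ((s - 1 : ℕ) : ℝ) := by exact_mod_cast hcard'
      _ = (s : ℝ) - 1 := by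
          rw [Nat.cast_sub (by omega : 1 ≤ s)]
          norm_num
  have hcu : ((G.neighborFinset u).filter (fun w => G.Adj w u)) = G.neighborFinset u := by
    apply Finset.filter_true_of_mem
    intro w hw
    exact ((G.mem_neighborFinset u w).mp hw).symm
  set d : ℝ := ((G.neighborFinset u).card : ℝ) with hd
  have split : ∑ y ∈ Finset.univ,
        ((((G.neighborFinset u).filter (fun w => G.Adj w y)).card : ℝ)) * x y
      = d * x u + ∑ y ∈ Finset.univ.erase u,
          ((((G.neighborFinset u).filter (fun w => G.Adj w y)).card : ℝ)) * x y := by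
    rw [← Finset.add_sum_erase _ _ (mem_univ u), hcu]
  have hNsub : G.neighborFinset u ⊆ Finset.univ.erase u := by
    intro w hw
    refine Finset.mem_erase.mpr ⟨?_, mem_univ w⟩
    rintro rfl
    exact G.irrefl ((G.mem_neighborFinset w w).mp hw)
  have hdd : ∑ w ∈ G.neighborFinset u, (x u - x w) = d * x u - lam * x u := by
    rw [Finset.sum_sub_distrib, Finset.sum_const, nsmul_eq_mul, e1]
  have hcarde : ((Finset.univ.erase u).card : ℝ) = (n : ℝ) - 1 := by
    rw [Finset.card_erase_of_mem (mem_univ u), Finset.card_univ, hcard,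
      Nat.cast_sub hn1]
    norm_num
  have hs2 : (0 : ℝ) ≤ (s : ℝ) - 2 := by
    have : (2 : ℝ) ≤ (s : ℝ) := by exact_mod_cast hs
    linarith
  have main : (lam ^ 2 - lam) * x u ≤ (((s : ℝ) - 1) * ((n : ℝ) - 1)) * x u := by
    calc (lam ^ 2 - lam) * x u
        = (d * x u - lam * x u) + ∑ y ∈ Finset.univ.erase u,
            ((((G.neighborFinset u).filter (fun w => G.Adj w y)).card : ℝ)) * x y := by
          rw [sub_mul, ← e2, e3, split]; ring
      _ ≤ (∑ y ∈ Finset.univ.erase u, (x u - x y))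
            + ∑ y ∈ Finset.univ.erase u, ((s : ℝ) - 1) * x y := by
          refine add_le_add ?_ ?_
          · rw [← hdd]
            refine Finset.sum_le_sum_of_subset_of_nonneg hNsub fun y _ _ => ?_
            exact sub_nonneg.mpr (hu y (mem_univ y))
          · refine Finset.sum_le_sum fun y hy => ?_
            exact mul_le_mul_of_nonneg_right
              (hcodeg y (Finset.ne_of_mem_erase hy)) (hxnn y)
      _ = ∑ y ∈ Finset.univ.erase u, (x u + ((s : ℝ) - 2) * x y) := by
          rw [← Finset.sum_add_distrib]
          exact Finset.sum_congr rfl fun y _ => by ring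
      _ ≤ ∑ y ∈ Finset.univ.erase u, (x u + ((s : ℝ) - 2) * x u) := by
          refine Finset.sum_le_sum fun y _ => ?_
          have := mul_le_mul_of_nonneg_left (hu y (mem_univ y)) hs2
          linarith
      _ = (((s : ℝ) - 1) * ((n : ℝ) - 1)) * x u := by
          rw [Finset.sum_const, nsmul_eq_mul, hcarde]; ring
  exact (mul_le_mul_iff_left₀ hxu).mp main


/-- **Theorem 1, case `t = 2`.** If `G` is a `K_{s,2}`-free graph on `n ≥ 1` vertices
with `s ≥ 2`, then every eigenvalue `μ` of its adjacency matrix satisfies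
`μ ≤ 1/2 + sqrt((s-1)(n-1) + 1/4)`. -/
theorem spectral_Ks2_free_bound
    {V : Type*} [Fintype V] [DecidableEq V]
    (s n : ℕ) (hs : 2 ≤ s) (hn : 1 ≤ n)
    (G : SimpleGraph V) [DecidableRel G.Adj]
    (hcard : Fintype.card V = n)
    (hfree : ¬ ∃ (S T : Finset V), Disjoint S T ∧ S.card = s ∧ T.card = 2 ∧
        ∀ a ∈ S, ∀ b ∈ T, G.Adj a b)
    (μ : ℝ) (v : V → ℝ) (hv : v ≠ 0)
    (hμ : (G.adjMatrix ℝ).mulVec v = μ • v) :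
    μ ≤ 1 / 2 + Real.sqrt (((s : ℝ) - 1) * ((n : ℝ) - 1) + 1 / 4) := by
  classical
  set A : Matrix V V ℝ := G.adjMatrix ℝ with hAdef
  have hA : A.IsHermitian := by
    ext i j
    simp only [Matrix.conjTranspose_apply, star_trivial, hAdef, SimpleGraph.adjMatrix_apply]
    by_cases h : G.Adj i j
    · simp [h, h.symm]
    · have h' : ¬ G.Adj j i := fun hh => h hh.symm
      simp [h, h']
  haveI hne : Nonempty V := Fintype.card_pos_iff.mp (by omega)
  obtain ⟨i₀, -, hi₀⟩ := Finset.exists_max_image Finset.univ hA.eigenvalues univ_nonempty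
  set lam : ℝ := hA.eigenvalues i₀ with hlamdef
  set U : Matrix V V ℝ := (Matrix.IsHermitian.eigenvectorUnitary hA : Matrix V V ℝ) with hUdef
  have hUU : U * star U = 1 :=
    Matrix.mem_unitaryGroup_iff.mp (Matrix.IsHermitian.eigenvectorUnitary hA).2
  have hspec : A = U * Matrix.diagonal hA.eigenvalues * star U := by
    have h := hA.spectral_theorem
    have h2 : (RCLike.ofReal ∘ hA.eigenvalues : V → ℝ) = hA.eigenvalues := by
      funext i; simp
    rw [h2] at h
    exact h
  have hB : lam • (1 : Matrix V V ℝ) - A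
      = U * Matrix.diagonal (fun i => lam - hA.eigenvalues i) * star U := by
    have hdiag : Matrix.diagonal (fun i => lam - hA.eigenvalues i)
        = lam • (1 : Matrix V V ℝ) - Matrix.diagonal hA.eigenvalues := by
      ext i j
      by_cases h : i = j <;>
        simp [Matrix.diagonal_apply, Matrix.one_apply, h]
    have h1 : U * (lam • (1 : Matrix V V ℝ)) * star U = lam • (1 : Matrix V V ℝ) := by
      rw [Matrix.mul_smul, Matrix.mul_one, Matrix.smul_mul, hUU]
    rw [hdiag, Matrix.mul_sub, Matrix.sub_mul, h1, ← hspec]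
  have hPSD : (lam • (1 : Matrix V V ℝ) - A).PosSemidef := by
    rw [hB]
    have hd : (Matrix.diagonal (fun i => lam - hA.eigenvalues i)).PosSemidef :=
      Matrix.posSemidef_diagonal_iff.mpr fun i => sub_nonneg.mpr (hi₀ i (mem_univ i))
    have h := hd.mul_mul_conjTranspose_same U
    rwa [← Matrix.star_eq_conjTranspose] at h
  have hstar : ∀ w : V → ℝ, star w = w := fun w => funext fun i => star_trivial (w i)
  -- μ ≤ lam
  have hμlam : μ ≤ lam := by
    have h0 := hPSD.dotProduct_mulVec_nonneg v
    have hx : (lam • (1 : Matrix V V ℝ) - A) *ᵥ v = (lam - μ) • v := by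
      rw [Matrix.sub_mulVec, hμ, Matrix.smul_mulVec, Matrix.one_mulVec, sub_smul]
    rw [hx, hstar v, dotProduct_smul, smul_eq_mul] at h0
    have hvv : 0 < v ⬝ᵥ v := by
      obtain ⟨i, hi⟩ := Function.ne_iff.mp hv
      exact Finset.sum_pos' (fun j _ => mul_self_nonneg (v j))
        ⟨i, mem_univ i, mul_self_pos.mpr hi⟩
    nlinarith
  -- Perron eigenvector
  set z : V → ℝ := ⇑(hA.eigenvectorBasis i₀) with hzdef
  have hz : A *ᵥ z = lam • z := hA.mulVec_eigenvectorBasis i₀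
  have hz0 : z ≠ 0 := by
    intro h
    have h1 := hA.eigenvectorBasis.orthonormal.1 i₀
    rw [EuclideanSpace.norm_eq] at h1
    have h2 : ∀ j : V, (hA.eigenvectorBasis i₀) j = (0:ℝ) := fun j => congrFun h j
    simp [h2] at h1
  set x : V → ℝ := fun i => |z i| with hxdef
  have hxnn : ∀ i, 0 ≤ x i := fun i => abs_nonneg _
  have hx0 : x ≠ 0 := by
    intro h
    apply hz0
    funext i
    have := congrFun h i
    simpa [hxdef, abs_eq_zero] using this
  have hxx : x ⬝ᵥ x = z ⬝ᵥ z :=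
    Finset.sum_congr rfl fun i _ => abs_mul_abs_self (z i)
  have hAx : z ⬝ᵥ (A *ᵥ z) ≤ x ⬝ᵥ (A *ᵥ x) := by
    simp only [dotProduct, Matrix.mulVec, Finset.mul_sum]
    refine Finset.sum_le_sum fun i _ => Finset.sum_le_sum fun j _ => ?_
    by_cases hij : G.Adj i j
    · simp only [hAdef, SimpleGraph.adjMatrix_apply, hij, if_true]
      calc z i * (1 * z j) = z i * z j := by ring
        _ ≤ |z i * z j| := le_abs_self _
        _ = |z i| * (1 * |z j|) := by rw [abs_mul]; ring
    · simp [hAdef, hij]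
  have hquad : star x ⬝ᵥ ((lam • (1 : Matrix V V ℝ) - A) *ᵥ x) ≤ 0 := by
    have hexp : star x ⬝ᵥ ((lam • (1 : Matrix V V ℝ) - A) *ᵥ x)
        = lam * (x ⬝ᵥ x) - x ⬝ᵥ (A *ᵥ x) := by
      rw [hstar x, Matrix.sub_mulVec, Matrix.smul_mulVec, Matrix.one_mulVec,
        dotProduct_sub, dotProduct_smul, smul_eq_mul]
    have hz2 : z ⬝ᵥ (A *ᵥ z) = lam * (z ⬝ᵥ z) := by
      rw [hz, dotProduct_smul, smul_eq_mul]
    rw [hexp, hxx]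
    linarith [hAx, hz2]
  have hxeig : A *ᵥ x = lam • x := by
    have heq : star x ⬝ᵥ ((lam • (1 : Matrix V V ℝ) - A) *ᵥ x) = 0 :=
      le_antisymm hquad (hPSD.dotProduct_mulVec_nonneg x)
    have hker := (hPSD.dotProduct_mulVec_zero_iff x).mp heq
    rw [Matrix.sub_mulVec, Matrix.smul_mulVec, Matrix.one_mulVec] at hker
    have := sub_eq_zero.mp hker
    exact this.symm
  have hlam2 : lam ^ 2 - lam ≤ ((s : ℝ) - 1) * ((n : ℝ) - 1) :=
    core_bound s n hs G hcard hfree lam x hx0 hxnn hxeig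
  have hC : (0 : ℝ) ≤ ((s : ℝ) - 1) * ((n : ℝ) - 1) := by
    have h1 : (2 : ℝ) ≤ (s : ℝ) := by exact_mod_cast hs
    have h2 : (1 : ℝ) ≤ (n : ℝ) := by exact_mod_cast hn
    nlinarith
  exact le_trans hμlam (quad_bound lam _ hC hlam2)
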